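/- Let v₀ : ℝ² → ℝ be a nonnegative Borel function with v₀(x) ≤ α₁ e^{−α₂|x|} for constants α₁, α₂ > 0, and let v̂₀ denote its Fourier transform. Then for every a ∈ ℝ² and every p ∈ ℝ², |v̂₀(p + a) − v̂₀(p − a)| ≤ min(1, |a|) · |f̂_a(p)|, where f_a(x) = −2 min(1,|a|)^{−1} sin(a·x) v₀(x) is an L² function whose L² norm is bounded uniformly in a. -/

import Mathlib

open MeasureTheory Real

lemma one_add_le_exp_aux (c : ℝ) (hc : 0 < c) (n : ℕ) (r : ℝ) (hr : 0 ≤ r) :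
    (1 + r) ^ n ≤ (max 1 ((n : ℝ) / c)) ^ n * Real.exp (c * r) := by
  rcases Nat.eq_zero_or_pos n with h0 | hn
  · simp [h0, Real.exp_pos, (Real.exp_pos _).le, Real.one_le_exp (by positivity), hr, hc.le,
      mul_nonneg]
  set M := max 1 ((n : ℝ) / c) with hM
  have hM1 : (1 : ℝ) ≤ M := le_max_left _ _
  have hMn : (n : ℝ) / c ≤ M := le_max_right _ _
  have hnpos : (0 : ℝ) < n := by exact_mod_cast hn
  have key : 1 + r ≤ M * Real.exp (c * r / n) := by
    have h1 : c * r / n + 1 ≤ Real.exp (c * r / n) := Real.add_one_le_exp _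
    have h2 : M * (c * r / n + 1) ≤ M * Real.exp (c * r / n) := by
      apply mul_le_mul_of_nonneg_left h1 (by linarith)
    refine le_trans ?_ h2
    have h3 : r ≤ M * (c * r / n) := by
      have : ((n : ℝ) / c) * (c * r / n) = r := by field_simp
      nlinarith [mul_le_mul_of_nonneg_right hMn (by positivity : 0 ≤ c * r / n)]
    nlinarith
  calc (1 + r) ^ n ≤ (M * Real.exp (c * r / n)) ^ n :=
        pow_le_pow_left₀ (by linarith) key n
    _ = M ^ n * Real.exp (c * r / n) ^ n := mul_pow _ _ _
    _ = M ^ n * Real.exp (c * r) := by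
        rw [← Real.exp_nat_mul]
        congr 1
        field_simp

lemma intPolyExp (c : ℝ) (hc : 0 < c) (n : ℕ) :
    Integrable (fun x : EuclideanSpace ℝ (Fin 2) =>
      (1 + ‖x‖) ^ n * Real.exp (-c * ‖x‖)) volume := by
  have h3 : (Module.finrank ℝ (EuclideanSpace ℝ (Fin 2)) : ℝ) < ((3 : ℕ) : ℝ) := by
    simp [finrank_euclideanSpace]; norm_num
  have hint := integrable_one_add_norm (E := EuclideanSpace ℝ (Fin 2)) (μ := volume) h3
  set M := max 1 (((n + 3 : ℕ) : ℝ) / c) with hM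
  refine (hint.const_mul (M ^ (n + 3))).mono' ?_ (Filter.Eventually.of_forall fun x => ?_)
  · apply Continuous.aestronglyMeasurable
    fun_prop
  · set r := ‖x‖ with hr
    have hr0 : (0 : ℝ) ≤ r := norm_nonneg x
    have h1r : (0 : ℝ) < 1 + r := by linarith
    have hpow := one_add_le_exp_aux c hc (n + 3) r hr0
    have hrpow : (1 + r) ^ (-((3 : ℕ) : ℝ)) = ((1 + r) ^ (3 : ℕ))⁻¹ := by
      rw [← Real.rpow_natCast (1 + r) 3, ← Real.rpow_neg h1r.le]
    rw [Real.norm_eq_abs, abs_of_nonneg (by positivity), hrpow, ← div_eq_mul_inv,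
      le_div_iff₀ (by positivity)]
    have hexp : Real.exp (-c * r) * Real.exp (c * r) = 1 := by
      rw [← Real.exp_add]; simp
    calc (1 + r) ^ n * Real.exp (-c * r) * (1 + r) ^ 3
        = (1 + r) ^ (n + 3) * Real.exp (-c * r) := by rw [pow_add]; ring
      _ ≤ (M ^ (n + 3) * Real.exp (c * r)) * Real.exp (-c * r) := by
          exact mul_le_mul_of_nonneg_right hpow (Real.exp_pos _).le
      _ = M ^ (n + 3) := by
          rw [mul_assoc, mul_comm (Real.exp (c * r)), hexp, mul_one]

lemma key_identity (v : ℝ) (a p x : EuclideanSpace ℝ (Fin 2)) (m : ℝ) (hm : 0 < m) :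
    Complex.exp (-Complex.I * ((inner ℝ (p+a) x : ℝ) : ℂ)) * (v : ℂ)
      - Complex.exp (-Complex.I * ((inner ℝ (p-a) x : ℝ) : ℂ)) * (v : ℂ)
    = Complex.I * (m : ℂ) * (Complex.exp (-Complex.I * ((inner ℝ p x : ℝ) : ℂ)) *
        ((-2 * m⁻¹ * Real.sin (inner ℝ a x : ℝ) * v : ℝ) : ℂ)) := by
  have hs : ((inner ℝ (p+a) x : ℝ) : ℂ) = ((inner ℝ p x : ℝ) : ℂ) + ((inner ℝ a x : ℝ) : ℂ) := by
    push_cast [inner_add_left]; ring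
  have hs' : ((inner ℝ (p-a) x : ℝ) : ℂ) = ((inner ℝ p x : ℝ) : ℂ) - ((inner ℝ a x : ℝ) : ℂ) := by
    push_cast [inner_sub_left]; ring
  set s : ℂ := ((inner ℝ p x : ℝ) : ℂ)
  set t : ℝ := (inner ℝ a x : ℝ)
  rw [hs, hs']
  have e1 : -Complex.I * (s + (t:ℂ)) = -Complex.I * s + (-t : ℝ) * Complex.I := by
    push_cast; ring
  have e2 : -Complex.I * (s - (t:ℂ)) = -Complex.I * s + (t : ℝ) * Complex.I := by
    push_cast; ring
  rw [e1, e2, Complex.exp_add, Complex.exp_add, Complex.exp_mul_I, Complex.exp_mul_I]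
  have hm' : (m : ℂ) ≠ 0 := by exact_mod_cast hm.ne'
  push_cast [← Complex.ofReal_cos, ← Complex.ofReal_sin, Complex.cos_neg, Complex.sin_neg]
  field_simp
  ring

/-- Fourier transform on ℝ² with the normalization `(2π)⁻¹ ∫ e^{-i p·x} f(x) dx`. -/
noncomputable def FT (f : EuclideanSpace ℝ (Fin 2) → ℂ)
    (p : EuclideanSpace ℝ (Fin 2)) : ℂ :=
  (2 * Real.pi)⁻¹ * ∫ x : EuclideanSpace ℝ (Fin 2),
    Complex.exp (-Complex.I * ((inner ℝ p x : ℝ) : ℂ)) * f x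

/-- For a nonnegative Borel `v₀` with exponential decay, and
`f_a(x) = -2 min(1,|a|)⁻¹ sin(a·x) v₀(x)`, one has
`|v̂₀(p+a) − v̂₀(p−a)| ≤ min(1,|a|) |f̂_a(p)|`, and the `L²` norms of the `f_a`
are bounded uniformly in `a ≠ 0`. -/
theorem stmt4 (v₀ : EuclideanSpace ℝ (Fin 2) → ℝ) (hmeas : Measurable v₀)
    (hpos : ∀ x, 0 ≤ v₀ x) (α₁ α₂ : ℝ) (hα₁ : 0 < α₁) (hα₂ : 0 < α₂)
    (hdecay : ∀ x, v₀ x ≤ α₁ * Real.exp (-α₂ * ‖x‖))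
    (f : EuclideanSpace ℝ (Fin 2) → EuclideanSpace ℝ (Fin 2) → ℝ)
    (hf : ∀ a x, f a x = -2 * (min 1 ‖a‖)⁻¹ * Real.sin (inner ℝ a x : ℝ) * v₀ x) :
    (∀ a : EuclideanSpace ℝ (Fin 2), a ≠ 0 → ∀ p : EuclideanSpace ℝ (Fin 2),
      ‖FT (fun x => (v₀ x : ℂ)) (p + a) - FT (fun x => (v₀ x : ℂ)) (p - a)‖ ≤
        min 1 ‖a‖ * ‖FT (fun x => (f a x : ℂ)) p‖) ∧
    (∃ C : ℝ, ∀ a : EuclideanSpace ℝ (Fin 2), a ≠ 0 →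
      MemLp (fun x => f a x) 2 volume ∧
      eLpNorm (fun x => f a x) 2 volume ≤ ENNReal.ofReal C) := by
  -- integrability of the FT integrand for v₀
  have hInt : ∀ q : EuclideanSpace ℝ (Fin 2),
      Integrable (fun x : EuclideanSpace ℝ (Fin 2) =>
        Complex.exp (-Complex.I * ((inner ℝ q x : ℝ) : ℂ)) * (v₀ x : ℂ)) volume := by
    intro q
    have hint : Integrable (fun x : EuclideanSpace ℝ (Fin 2) =>
        α₁ * Real.exp (-α₂ * ‖x‖)) volume := by
      have := (intPolyExp α₂ hα₂ 0).const_mul α₁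
      simpa using this
    refine hint.mono' ?_ (Filter.Eventually.of_forall fun x => ?_)
    · apply AEStronglyMeasurable.mul
      · apply Continuous.aestronglyMeasurable
        exact Complex.continuous_exp.comp ((continuous_const.mul
          (Complex.continuous_ofReal.comp (continuous_const.inner continuous_id))))
      · exact (Complex.measurable_ofReal.comp hmeas).aestronglyMeasurable
    · rw [norm_mul]
      have h1 : ‖Complex.exp (-Complex.I * ((inner ℝ q x : ℝ) : ℂ))‖ = 1 := by
        rw [Complex.norm_exp]
        simp
      rw [h1, one_mul, Complex.norm_real, Real.norm_eq_abs, abs_of_nonneg (hpos x)]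
      exact hdecay x
  constructor
  · -- part 1
    intro a ha p
    set m : ℝ := min 1 ‖a‖ with hmdef
    have hm : 0 < m := lt_min one_pos (norm_pos_iff.mpr ha)
    have key : FT (fun x => (v₀ x : ℂ)) (p + a) - FT (fun x => (v₀ x : ℂ)) (p - a)
        = Complex.I * (m : ℂ) * FT (fun x => (f a x : ℂ)) p := by
      unfold FT
      have hpt : (∫ x : EuclideanSpace ℝ (Fin 2),
            (Complex.exp (-Complex.I * ((inner ℝ (p+a) x : ℝ) : ℂ)) * (v₀ x : ℂ)
            - Complex.exp (-Complex.I * ((inner ℝ (p-a) x : ℝ) : ℂ)) * (v₀ x : ℂ)))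
          = Complex.I * (m : ℂ) * ∫ x : EuclideanSpace ℝ (Fin 2),
              Complex.exp (-Complex.I * ((inner ℝ p x : ℝ) : ℂ)) * ((f a x : ℝ) : ℂ) := by
        rw [← integral_const_mul]
        apply integral_congr_ae
        apply Filter.Eventually.of_forall
        intro x
        simp only [hf a x]
        exact_mod_cast key_identity (v₀ x) a p x m hm
      rw [← mul_sub, ← integral_sub (hInt (p + a)) (hInt (p - a)), hpt]
      ring
    rw [key, norm_mul, norm_mul, Complex.norm_I, Complex.norm_real, Real.norm_eq_abs,
      abs_of_pos hm, one_mul]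
  · -- part 2
    set g : EuclideanSpace ℝ (Fin 2) → ℝ :=
      fun x => 2 * α₁ * ((1 + ‖x‖) * Real.exp (-α₂ * ‖x‖)) with hgdef
    have hgmeas : AEStronglyMeasurable g volume := by
      apply Continuous.aestronglyMeasurable; fun_prop
    have hgmem : MemLp g 2 volume := by
      rw [memLp_two_iff_integrable_sq hgmeas]
      have hint := (intPolyExp (2 * α₂) (by positivity) 2).const_mul (4 * α₁ ^ 2)
      refine hint.congr ?_
      apply Filter.Eventually.of_forall
      intro x
      rw [hgdef]
      simp only
      rw [show (-(2 * α₂) * ‖x‖) = (-α₂ * ‖x‖) + (-α₂ * ‖x‖) by ring, Real.exp_add]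
      ring
    refine ⟨(eLpNorm g 2 volume).toReal, fun a ha => ?_⟩
    have hm : 0 < min 1 ‖a‖ := lt_min one_pos (norm_pos_iff.mpr ha)
    have hbound : ∀ x, ‖f a x‖ ≤ ‖g x‖ := by
      intro x
      have hgx : 0 ≤ g x := by rw [hgdef]; positivity
      rw [Real.norm_eq_abs, Real.norm_eq_abs, abs_of_nonneg hgx, hf a x]
      set t : ℝ := (inner ℝ a x : ℝ)
      have hsin : (min 1 ‖a‖)⁻¹ * |Real.sin t| ≤ 1 + ‖x‖ := by
        rcases le_total ‖a‖ 1 with hle | hle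
        · rw [min_eq_right hle]
          have h1 : |Real.sin t| ≤ |t| := Real.abs_sin_le_abs
          have h2 : |t| ≤ ‖a‖ * ‖x‖ := abs_real_inner_le_norm a x
          have ha' : 0 < ‖a‖ := norm_pos_iff.mpr ha
          have : ‖a‖⁻¹ * |Real.sin t| ≤ ‖a‖⁻¹ * (‖a‖ * ‖x‖) :=
            mul_le_mul_of_nonneg_left (h1.trans h2) (by positivity)
          rw [inv_mul_cancel_left₀ ha'.ne'] at this
          linarith [norm_nonneg x]
        · rw [min_eq_left hle, inv_one, one_mul]
          have := Real.abs_sin_le_one t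
          linarith [norm_nonneg x]
      have hva : v₀ x ≤ α₁ * Real.exp (-α₂ * ‖x‖) := hdecay x
      have habs : |(-2 : ℝ) * (min 1 ‖a‖)⁻¹ * Real.sin t * v₀ x|
          = 2 * ((min 1 ‖a‖)⁻¹ * |Real.sin t|) * v₀ x := by
        rw [abs_mul, abs_mul, abs_mul, abs_of_nonneg (hpos x),
          abs_of_nonneg (by positivity : (0:ℝ) ≤ (min 1 ‖a‖)⁻¹)]
        rw [show |(-2 : ℝ)| = 2 by norm_num]
        ring
      rw [habs, hgdef]
      simp only
      have hv0 := hpos x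
      have hexp := (Real.exp_pos (-α₂ * ‖x‖)).le
      nlinarith [mul_le_mul_of_nonneg_right hsin hv0,
        mul_le_mul_of_nonneg_left hva (by positivity : (0:ℝ) ≤ 2 * (1 + ‖x‖))]
    have hfmeas : AEStronglyMeasurable (fun x => f a x) volume := by
      have : Measurable (fun x => f a x) := by
        have h1 : Measurable fun x : EuclideanSpace ℝ (Fin 2) =>
            Real.sin (inner ℝ a x : ℝ) :=
          Real.continuous_sin.measurable.comp
            (continuous_const.inner continuous_id).measurable
        simp only [hf]
        fun_prop
      exact this.aestronglyMeasurable
    refine ⟨hgmem.of_le hfmeas (Filter.Eventually.of_forall hbound), ?_⟩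
    rw [ENNReal.ofReal_toReal hgmem.2.ne]
    exact eLpNorm_mono hbound
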